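/- arXiv:quant-ph/9807056 — 4 statements merged into one kernel-verified Lean document; each statement's English description precedes it below -/
import Mathlib

section
/- If x lies in the closed linear span of the set of coboundaries {b − Uᵐ b : b ∈ H, m ∈ ℤ}, then the Cesàro averages (1/N) ∑_{n=0}^{N−1} Uⁿ x converge in norm to 0 as N → ∞. -/
open Filter Finset Topology

private lemma zpow_fixed_aux {H : Type*} [NormedAddCommGroup H] [InnerProductSpace ℂ H]
    (U : H ≃ₗᵢ[ℂ] H) {z : H} (h : U z = z) (m : ℤ) : (U ^ m) z = z := by
  have hinv : U⁻¹ z = z := by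
    conv_lhs => rw [← h]
    exact U.symm_apply_apply z
  induction m using Int.induction_on with
  | zero => simp
  | succ n ih => rw [zpow_add_one]; show (U ^ (n : ℤ)) (U z) = z; rw [h, ih]
  | pred n ih => rw [sub_eq_add_neg, zpow_add, zpow_neg_one]
                 show (U ^ (-n : ℤ)) (U⁻¹ z) = z; rw [hinv, ih]

/-- If `x` lies in the closed linear span of the set of coboundaries
`{b − Uᵐ b : b ∈ H, m ∈ ℤ}`, then the Cesàro averages `(1/N) ∑_{n=0}^{N-1} Uⁿ x`
converge in norm to `0` as `N → ∞`. -/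
theorem cesaro_averages_vanish_on_coboundary_span
    {H : Type*} [NormedAddCommGroup H] [InnerProductSpace ℂ H] [CompleteSpace H]
    (U : H ≃ₗᵢ[ℂ] H) (x : H)
    (hx : x ∈ closure (Submodule.span ℂ {y : H | ∃ (b : H) (m : ℤ), y = b - (U ^ m) b} : Set H)) :
    Tendsto (fun N : ℕ => (N : ℂ)⁻¹ • ∑ n ∈ Finset.range N, (U ^ n) x)
      atTop (𝓝 0) := by
  set f : H →L[ℂ] H := U.toLinearIsometry.toContinuousLinearMap with hf
  have hf1 : ‖f‖ ≤ 1 := U.toLinearIsometry.norm_toContinuousLinearMap_le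
  have key := f.tendsto_birkhoffAverage_orthogonalProjection (𝕜 := ℂ) hf1 x
  -- the orthogonal projection is zero
  have hproj : (f.eqLocus (1 : H →L[ℂ] H)).orthogonalProjectionOnto x = 0 := by
    rw [Submodule.orthogonalProjectionOnto_eq_zero_iff]
    have hclosed : IsClosed ((f.eqLocus (1 : H →L[ℂ] H) : Submodule ℂ H)ᗮ : Set H) :=
      Submodule.isClosed_orthogonal _
    refine closure_minimal ?_ hclosed hx
    rw [SetLike.coe_subset_coe]
    refine (Submodule.span_le).2 ?_
    rintro y ⟨b, m, rfl⟩
    rw [SetLike.mem_coe, Submodule.mem_orthogonal']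
    intro u hu
    have hu' : U u = u := hu
    have : (U ^ m) u = u := zpow_fixed_aux U hu' m
    rw [inner_sub_left]
    have : inner ℂ ((U ^ m) b) u = (inner ℂ b u : ℂ) := by
      conv_lhs => rw [← this]
      exact (U ^ m).inner_map_map b u
    rw [this, sub_self]
  rw [hproj] at key
  have hiter : ∀ (n : ℕ) (v : H), f^[n] v = (U ^ n) v := by
    intro n
    induction n with
    | zero => simp
    | succ n ih =>
      intro v
      rw [Function.iterate_succ_apply, pow_succ]
      exact ih (U v)
  have : (fun N : ℕ => (N : ℂ)⁻¹ • ∑ n ∈ Finset.range N, (U ^ n) x)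
      = fun N => birkhoffAverage ℂ f _root_.id N x := by
    funext N
    simp [birkhoffAverage, birkhoffSum, hiter]
  rw [this]
  simpa using key
end

section
/- Reproducing kernel property of Bargmann space: let ψ : ℂ → ℂ be an entire function (complex-differentiable everywhere) with ∫_ℂ |ψ(w)|² dμ_ℏ(w) < ∞. Then for every z ∈ ℂ, ∫_ℂ exp(z·conj(w)/ℏ) · ψ(w) dμ_ℏ(w) = ψ(z). -/
open MeasureTheory Complex

/-- The Bargmann Gaussian measure `μ_ℏ` on `ℂ`, with density
`z ↦ (πℏ)⁻¹ exp(−|z|²/ℏ)` with respect to Lebesgue measure on `ℂ ≅ ℝ²`. -/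
noncomputable def bargmannMeasure (ℏ : ℝ) : Measure ℂ :=
  MeasureTheory.volume.withDensity
    (fun z => ENNReal.ofReal ((Real.pi * ℏ)⁻¹ * Real.exp (-‖z‖ ^ 2 / ℏ)))

section Aux
open Set
open scoped ENNReal NNReal Real

theorem my_integrableOn_polar {E : Type*} [NormedAddCommGroup E] [NormedSpace ℝ E]
    (f : ℝ × ℝ → E) (hf : Integrable f) :
    IntegrableOn (fun p => p.1 • f (polarCoord.symm p)) polarCoord.target := by
  set B : ℝ × ℝ → ℝ × ℝ →L[ℝ] ℝ × ℝ := fun p =>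
    LinearMap.toContinuousLinearMap (Matrix.toLin (Module.Basis.finTwoProd ℝ) (Module.Basis.finTwoProd ℝ)
      !![Real.cos p.2, -p.1 * Real.sin p.2; Real.sin p.2, p.1 * Real.cos p.2]) with hB
  have hder : ∀ p ∈ polarCoord.target,
      HasFDerivWithinAt polarCoord.symm (B p) polarCoord.target p :=
    fun p _ => (hasFDerivAt_polarCoord_symm p).hasFDerivWithinAt
  have B_det : ∀ p, (B p).det = p.1 := by
    intro p
    conv_rhs => rw [← one_mul p.1, ← Real.cos_sq_add_sin_sq p.2]
    simp only [hB, neg_mul, LinearMap.det_toContinuousLinearMap, LinearMap.det_toLin,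
      Matrix.det_fin_two_of, sub_neg_eq_add]
    ring
  have hinj : InjOn polarCoord.symm polarCoord.target := polarCoord.symm.injOn
  have himg : polarCoord.symm '' polarCoord.target = polarCoord.source :=
    polarCoord.symm_image_target_eq_source
  have h1 : IntegrableOn f (polarCoord.symm '' polarCoord.target) := by
    rw [himg]; exact hf.integrableOn
  have h2 := (integrableOn_image_iff_integrableOn_abs_det_fderiv_smul volume
    polarCoord.open_target.measurableSet hder hinj f).mp h1
  refine h2.congr_fun (fun p hp => ?_) polarCoord.open_target.measurableSet
  beta_reduce
  rw [B_det, abs_of_pos hp.1]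

theorem my_integrableOn_polar_complex {E : Type*} [NormedAddCommGroup E] [NormedSpace ℝ E]
    (f : ℂ → E) (hf : Integrable f) :
    IntegrableOn (fun p : ℝ × ℝ => p.1 • f (Complex.polarCoord.symm p)) polarCoord.target := by
  have hf' : Integrable (f ∘ Complex.measurableEquivRealProd.symm) := by
    rw [MeasurePreserving.integrable_comp_emb Complex.volume_preserving_equiv_real_prod.symm
      Complex.measurableEquivRealProd.symm.measurableEmbedding]
    exact hf
  have := my_integrableOn_polar _ hf'
  exact this

open Complex in
theorem my_circle_avg (g : ℂ → ℂ) (hg : Differentiable ℂ g) {r : ℝ} (hr : 0 < r) :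
    ∫ θ in Ioo (-π) π, g (Complex.polarCoord.symm (r, θ)) = (2 * π) • g 0 := by
  have hmap : ∀ θ : ℝ, Complex.polarCoord.symm (r, θ) = circleMap 0 r θ := by
    intro θ
    simp [circleMap, Complex.exp_mul_I, Complex.ofReal_cos, Complex.ofReal_sin]
  have hper : Function.Periodic (fun θ => g (circleMap 0 r θ)) (2 * π) :=
    (periodic_circleMap 0 r).comp g
  have hc := (hg.differentiableOn (s := Metric.closedBall 0 r)).circleIntegral_sub_inv_smul
    (Metric.mem_ball_self hr)
  rw [circleIntegral] at hc
  have heq : ∀ θ : ℝ, deriv (circleMap 0 r) θ • ((circleMap 0 r θ - 0)⁻¹ • g (circleMap 0 r θ))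
      = Complex.I * g (circleMap 0 r θ) := by
    intro θ
    rw [deriv_circleMap, smul_eq_mul, smul_eq_mul, sub_zero]
    have hne : circleMap 0 r θ ≠ 0 := circleMap_ne_center hr.ne'
    field_simp
  simp only [heq, intervalIntegral.integral_const_mul] at hc
  have hI : (2 * ↑π * Complex.I) • g 0 = Complex.I * ((2 * π) • g 0) := by
    rw [smul_eq_mul, real_smul]
    push_cast
    ring
  rw [hI] at hc
  have h2 : ∫ θ in (0:ℝ)..2 * π, g (circleMap 0 r θ) = (2 * π) • g 0 :=
    mul_left_cancel₀ Complex.I_ne_zero hc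
  calc ∫ θ in Ioo (-π) π, g (Complex.polarCoord.symm (r, θ))
      = ∫ θ in Ioo (-π) π, g (circleMap 0 r θ) := by simp_rw [hmap]
    _ = ∫ θ in (-π)..π, g (circleMap 0 r θ) := by
        rw [intervalIntegral.integral_of_le (by linarith [Real.pi_pos]),
          MeasureTheory.integral_Ioc_eq_integral_Ioo]
    _ = ∫ θ in (0:ℝ)..2 * π, g (circleMap 0 r θ) := by
        have := hper.intervalIntegral_add_eq (-π) 0
        rw [show -π + 2 * π = π by ring, zero_add] at this
        exact this
    _ = (2 * π) • g 0 := h2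

theorem my_radial {ℏ : ℝ} (hℏ : 0 < ℏ) :
    ∫ r in Ioi (0:ℝ), r * Real.exp (-r ^ 2 / ℏ) = ℏ / 2 := by
  have hb : (0:ℝ) < ((1/ℏ : ℂ)).re := by
    simp only [one_div, Complex.inv_re, Complex.ofReal_re, Complex.normSq_ofReal]
    positivity
  have h := integral_mul_cexp_neg_mul_sq hb
  have hcast : ∀ r : ℝ, (r:ℂ) * Complex.exp (-(1/ℏ : ℂ) * (r:ℂ) ^ 2)
      = ((r * Real.exp (-r ^ 2 / ℏ) : ℝ) : ℂ) := by
    intro r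
    rw [Complex.ofReal_mul, Complex.ofReal_exp]
    congr 1
    push_cast
    ring
  simp_rw [hcast] at h
  have hre : ((∫ r in Ioi (0:ℝ), r * Real.exp (-r ^ 2 / ℏ) : ℝ) : ℂ)
      = ∫ r in Ioi (0:ℝ), ((r * Real.exp (-r ^ 2 / ℏ) : ℝ) : ℂ) := (integral_ofReal).symm
  rw [← hre] at h
  have h2 : ((2 * (1/ℏ : ℂ))⁻¹ : ℂ) = ((ℏ/2 : ℝ) : ℂ) := by
    push_cast
    rw [mul_one_div, inv_div]
  rw [h2] at h
  exact_mod_cast h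

theorem my_mean_value {ℏ : ℝ} (hℏ : 0 < ℏ) (g : ℂ → ℂ) (hg : Differentiable ℂ g)
    (hint : Integrable (fun u : ℂ => Real.exp (-‖u‖ ^ 2 / ℏ) • g u)) :
    ∫ u : ℂ, Real.exp (-‖u‖ ^ 2 / ℏ) • g u = (π * ℏ) • g 0 := by
  set F : ℂ → ℂ := fun u => Real.exp (-‖u‖ ^ 2 / ℏ) • g u with hF
  have key := my_integrableOn_polar_complex F hint
  rw [polarCoord_target] at key
  rw [← Complex.integral_comp_polarCoord_symm F, polarCoord_target]
  rw [Measure.volume_eq_prod] at key ⊢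
  rw [setIntegral_prod _ key]
  have hinner : ∀ r ∈ Ioi (0:ℝ),
      (∫ θ in Ioo (-π) π, (r, θ).1 • F (Complex.polarCoord.symm (r, θ)))
        = (r * Real.exp (-r ^ 2 / ℏ) * (2 * π)) • g 0 := by
    intro r hr
    have habs : ∀ θ : ℝ, F (Complex.polarCoord.symm (r, θ))
        = Real.exp (-r ^ 2 / ℏ) • g (Complex.polarCoord.symm (r, θ)) := by
      intro θ
      simp only [hF, Complex.norm_polarCoord_symm, _root_.sq_abs]
    simp_rw [habs, smul_smul]
    rw [integral_smul, my_circle_avg g hg hr, smul_smul]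
  rw [setIntegral_congr_fun measurableSet_Ioi hinner]
  rw [integral_smul_const, integral_mul_const, my_radial hℏ]
  congr 1
  ring

theorem my_gauss_int {ℏ : ℝ} (hℏ : 0 < ℏ) (c : ℝ) :
    Integrable (fun w : ℂ => Real.exp (c * ‖w‖ - ‖w‖ ^ 2 / ℏ)) := by
  have hb : (0:ℝ) < (((1/(2*ℏ) : ℝ)) : ℂ).re := by
    simp only [Complex.ofReal_re]
    positivity
  have h0 := GaussianFourier.integrable_cexp_neg_mul_sq_norm_add
    (b := ((1/(2*ℏ) : ℝ) : ℂ)) (V := ℂ) hb 0 0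
  have h1 : Integrable (fun v : ℂ => Real.exp (-(1/(2*ℏ)) * ‖v‖^2)) := by
    have h2 := h0.norm
    refine h2.congr (Filter.Eventually.of_forall fun v => ?_)
    simp only [Complex.norm_exp]
    congr 1
    rw [zero_mul, add_zero, ← Complex.ofReal_pow, ← Complex.ofReal_neg, ← Complex.ofReal_mul,
      Complex.ofReal_re]
  have hbd : Integrable (fun v : ℂ => Real.exp (c^2*ℏ/2) * Real.exp (-(1/(2*ℏ)) * ‖v‖^2)) :=
    h1.const_mul _
  refine hbd.mono' ?_ (Filter.Eventually.of_forall fun w => ?_)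
  · refine Continuous.aestronglyMeasurable (Real.continuous_exp.comp ?_)
    exact ((continuous_const.mul continuous_norm).sub
      ((continuous_norm.pow 2).div_const ℏ))
  · rw [Real.norm_of_nonneg (Real.exp_pos _).le, ← Real.exp_add]
    refine Real.exp_le_exp.mpr ?_
    have ha : ‖w‖ = ‖w‖ := rfl
    rw [ha]
    set a := ‖w‖
    have hinv : ℏ * ℏ⁻¹ = 1 := mul_inv_cancel₀ hℏ.ne'
    have hinvpos : (0:ℝ) < ℏ⁻¹ := inv_pos.mpr hℏ
    rw [div_eq_mul_inv, div_eq_mul_inv, one_div, mul_inv_rev]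
    nlinarith [mul_nonneg hinvpos.le (sq_nonneg (c*ℏ - a)), sq_nonneg (c*ℏ - a)]

section Main

variable {ℏ : ℝ}

theorem density_cont (hℏ : 0 < ℏ) :
    Continuous (fun w : ℂ => (Real.pi * ℏ)⁻¹ * Real.exp (-‖w‖ ^ 2 / ℏ)) :=
  continuous_const.mul (Real.continuous_exp.comp
    (((continuous_norm.pow 2).neg).div_const ℏ))

theorem density_nonneg (hℏ : 0 < ℏ) (w : ℂ) :
    (0:ℝ) ≤ (Real.pi * ℏ)⁻¹ * Real.exp (-‖w‖ ^ 2 / ℏ) := by positivity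

theorem my_hG (hℏ : 0 < ℏ) (ψ : ℂ → ℂ) (hψ : Differentiable ℂ ψ)
    (hψ2 : Integrable (fun w => ‖ψ w‖ ^ 2) (bargmannMeasure ℏ)) (z : ℂ) :
    Integrable (fun w : ℂ => ((Real.pi * ℏ)⁻¹ * Real.exp (-‖w‖ ^ 2 / ℏ)) •
      (Complex.exp (z * (starRingEnd ℂ) w / (ℏ : ℂ)) * ψ w)) := by
  have hψ2' : Integrable
      (fun w : ℂ => ‖ψ w‖ ^ 2 * ((Real.pi * ℏ)⁻¹ * Real.exp (-‖w‖ ^ 2 / ℏ))) := by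
    have hmeas : Measurable (fun w : ℂ =>
        ENNReal.ofReal ((Real.pi * ℏ)⁻¹ * Real.exp (-‖w‖ ^ 2 / ℏ))) :=
      (density_cont hℏ).measurable.ennreal_ofReal
    have := (integrable_withDensity_iff hmeas
      (Filter.Eventually.of_forall fun w => ENNReal.ofReal_lt_top)).mp hψ2
    refine this.congr (Filter.Eventually.of_forall fun w => ?_)
    simp only [ENNReal.toReal_ofReal (density_nonneg hℏ w)]
  have hB1 : Integrable (fun w : ℂ =>
      Real.exp (2 * ‖z‖ / ℏ * ‖w‖ - ‖w‖ ^ 2 / ℏ)) :=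
    my_gauss_int hℏ _
  have hBint : Integrable (fun w : ℂ =>
      (Real.pi * ℏ)⁻¹ / 2 *
        Real.exp (2 * ‖z‖ / ℏ * ‖w‖ - ‖w‖ ^ 2 / ℏ)
      + 1/2 * (‖ψ w‖ ^ 2 * ((Real.pi * ℏ)⁻¹ * Real.exp (-‖w‖ ^ 2 / ℏ)))) :=
    (hB1.const_mul _).add (hψ2'.const_mul _)
  refine hBint.mono' ?_ (Filter.Eventually.of_forall fun w => ?_)
  · refine AEStronglyMeasurable.smul (density_cont hℏ).aestronglyMeasurable ?_
    refine AEStronglyMeasurable.mul ?_ hψ.continuous.aestronglyMeasurable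
    refine Continuous.aestronglyMeasurable (Complex.continuous_exp.comp ?_)
    exact (continuous_const.mul (Complex.continuous_conj)).div_const _
  · have hd := density_nonneg hℏ w
    rw [norm_smul, Real.norm_of_nonneg hd, norm_mul]
    have hK : ‖Complex.exp (z * (starRingEnd ℂ) w / (ℏ : ℂ))‖
        ≤ Real.exp (‖z‖ * ‖w‖ / ℏ) := by
      rw [Complex.norm_exp]
      refine Real.exp_le_exp.mpr ?_
      have h1 : (z * (starRingEnd ℂ) w / (ℏ:ℂ)).re = (z * (starRingEnd ℂ) w).re / ℏ := by
        rw [div_eq_mul_inv, ← Complex.ofReal_inv, Complex.mul_re, Complex.ofReal_re,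
          Complex.ofReal_im, mul_zero, sub_zero, div_eq_mul_inv]
      rw [h1]
      refine (div_le_div_iff_of_pos_right hℏ).mpr ?_
      calc (z * (starRingEnd ℂ) w).re ≤ ‖z * (starRingEnd ℂ) w‖ :=
            Complex.re_le_norm _
        _ = ‖z‖ * ‖w‖ := by rw [norm_mul, Complex.norm_conj]
    have hP : (0:ℝ) ≤ ‖ψ w‖ := norm_nonneg _
    have hKP : ‖Complex.exp (z * (starRingEnd ℂ) w / (ℏ : ℂ))‖ * ‖ψ w‖
        ≤ (Real.exp (2 * ‖z‖ / ℏ * ‖w‖) + ‖ψ w‖ ^ 2) / 2 := by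
      have h2 : Real.exp (‖z‖ * ‖w‖ / ℏ) ^ 2
          = Real.exp (2 * ‖z‖ / ℏ * ‖w‖) := by
        rw [← Real.exp_nat_mul]
        congr 1
        ring
      nlinarith [sq_nonneg (Real.exp (‖z‖ * ‖w‖ / ℏ) - ‖ψ w‖),
        mul_le_mul_of_nonneg_right hK hP, Real.exp_pos (‖z‖ * ‖w‖ / ℏ)]
    calc ((Real.pi * ℏ)⁻¹ * Real.exp (-‖w‖ ^ 2 / ℏ)) *
          (‖Complex.exp (z * (starRingEnd ℂ) w / (ℏ : ℂ))‖ * ‖ψ w‖)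
        ≤ ((Real.pi * ℏ)⁻¹ * Real.exp (-‖w‖ ^ 2 / ℏ)) *
          ((Real.exp (2 * ‖z‖ / ℏ * ‖w‖) + ‖ψ w‖ ^ 2) / 2) :=
          mul_le_mul_of_nonneg_left hKP hd
      _ = (Real.pi * ℏ)⁻¹ / 2 *
            (Real.exp (-‖w‖ ^ 2 / ℏ) *
              Real.exp (2 * ‖z‖ / ℏ * ‖w‖))
          + 1/2 * (‖ψ w‖ ^ 2 * ((Real.pi * ℏ)⁻¹ * Real.exp (-‖w‖ ^ 2 / ℏ))) := by
          ring
      _ = (Real.pi * ℏ)⁻¹ / 2 *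
            Real.exp (2 * ‖z‖ / ℏ * ‖w‖ - ‖w‖ ^ 2 / ℏ)
          + 1/2 * (‖ψ w‖ ^ 2 * ((Real.pi * ℏ)⁻¹ * Real.exp (-‖w‖ ^ 2 / ℏ))) := by
          rw [← Real.exp_add]
          ring_nf

end Main


/-- Reproducing kernel property of Bargmann space: for an entire function `ψ` which is
square-integrable with respect to `μ_ℏ`, `∫_ℂ exp(z conj(w)/ℏ) ψ(w) dμ_ℏ(w) = ψ(z)`. -/
theorem bargmann_reproducing_kernel (ℏ : ℝ) (hℏ : 0 < ℏ) (ψ : ℂ → ℂ)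
    (hψ : Differentiable ℂ ψ)
    (hψ2 : Integrable (fun w => ‖ψ w‖ ^ 2) (bargmannMeasure ℏ)) (z : ℂ) :
    ∫ w : ℂ, Complex.exp (z * (starRingEnd ℂ) w / (ℏ : ℂ)) * ψ w ∂(bargmannMeasure ℏ) =
      ψ z := by
  have hπℏ : (0:ℝ) < Real.pi * ℏ := by positivity
  -- Step 1: unfold withDensity
  have hmeasNN : Measurable (fun w : ℂ =>
      Real.toNNReal ((Real.pi * ℏ)⁻¹ * Real.exp (-‖w‖ ^ 2 / ℏ))) :=
    (density_cont hℏ).measurable.real_toNNReal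
  have hμ : bargmannMeasure ℏ = MeasureTheory.volume.withDensity
      (fun w : ℂ => (Real.toNNReal ((Real.pi * ℏ)⁻¹ * Real.exp (-‖w‖ ^ 2 / ℏ)) : ℝ≥0∞)) := rfl
  rw [hμ, integral_withDensity_eq_integral_smul hmeasNN]
  simp only [NNReal.smul_def, Real.coe_toNNReal _ (density_nonneg hℏ _)]
  -- Step 2: translate
  rw [← integral_add_right_eq_self (fun w : ℂ =>
    ((Real.pi * ℏ)⁻¹ * Real.exp (-‖w‖ ^ 2 / ℏ)) •
      (Complex.exp (z * (starRingEnd ℂ) w / (ℏ : ℂ)) * ψ w)) z]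
  -- Step 3: pointwise identity
  set g : ℂ → ℂ := fun u => Complex.exp (-(u * (starRingEnd ℂ) z) / (ℏ:ℂ)) * ψ (u + z) with hgdef
  have hne : (ℏ:ℂ) ≠ 0 := Complex.ofReal_ne_zero.mpr hℏ.ne'
  have hco : ∀ u : ℂ,
      ((Real.pi * ℏ)⁻¹ * Real.exp (-‖u + z‖ ^ 2 / ℏ)) •
        (Complex.exp (z * (starRingEnd ℂ) (u + z) / (ℏ : ℂ)) * ψ (u + z))
      = (Real.pi * ℏ)⁻¹ • (Real.exp (-‖u‖ ^ 2 / ℏ) • g u) := by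
    intro u
    have key : Complex.exp (((-‖u + z‖ ^ 2 / ℏ : ℝ) : ℂ)) *
          Complex.exp (z * (starRingEnd ℂ) (u + z) / (ℏ : ℂ))
        = Complex.exp (((-‖u‖ ^ 2 / ℏ : ℝ) : ℂ)) *
          Complex.exp (-(u * (starRingEnd ℂ) z) / (ℏ:ℂ)) := by
      rw [← Complex.exp_add, ← Complex.exp_add]
      congr 1
      rw [Complex.sq_norm, Complex.sq_norm]
      rw [Complex.ofReal_div, Complex.ofReal_div, Complex.ofReal_neg, Complex.ofReal_neg,
        ← Complex.mul_conj, ← Complex.mul_conj, map_add]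
      field_simp
      ring
    simp only [hgdef, Complex.real_smul, Complex.ofReal_mul, Complex.ofReal_inv,
      Complex.ofReal_exp] at key ⊢
    linear_combination ((Real.pi:ℂ) * (ℏ:ℂ))⁻¹ * ψ (u + z) * key
  simp only [hco]
  rw [integral_smul, my_mean_value hℏ g ?_ ?_]
  · have hg0 : g 0 = ψ z := by simp [hgdef]
    rw [hg0, smul_smul, inv_mul_cancel₀ hπℏ.ne', one_smul]
  · exact (Complex.differentiable_exp.comp
      (((differentiable_id.mul_const _).neg).div_const _)).mul
      (hψ.comp (differentiable_id.add_const z))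
  · have hG := (my_hG hℏ ψ hψ hψ2 z).comp_add_right z
    have := hG.smul (Real.pi * ℏ)
    refine this.congr (Filter.Eventually.of_forall fun u => ?_)
    simp only [Pi.smul_apply]
    rw [hco u, smul_smul, mul_inv_cancel₀ hπℏ.ne', one_smul]
end Aux
end

section
/- Toeplitz quantization is anti-Wick ordered: let ψ : ℂ → ℂ be an entire function (complex-differentiable everywhere) with ∫_ℂ |ψ(w)|² dμ_ℏ(w) < ∞, and let m, n be natural numbers. Then for every z ∈ ℂ, ∫_ℂ exp(z·conj(w)/ℏ) · wᵐ · conj(w)ⁿ · ψ(w) dμ_ℏ(w) = ℏⁿ · (d/dz)ⁿ [zᵐ ψ(z)], the n-th iterated complex derivative of the function z ↦ zᵐ ψ(z) evaluated at z. -/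
open MeasureTheory Complex

open Metric Set Filter
open scoped Real Topology

namespace BargmannAux

noncomputable def bdens (ℏ : ℝ) (z : ℂ) : ℝ :=
  (Real.pi * ℏ)⁻¹ * Real.exp (-‖z‖ ^ 2 / ℏ)

lemma bdens_nonneg {ℏ : ℝ} (hℏ : 0 < ℏ) (z : ℂ) : 0 ≤ bdens ℏ z := by
  have := Real.pi_pos
  unfold bdens
  positivity

lemma bdens_continuous (ℏ : ℝ) : Continuous (bdens ℏ) := by
  unfold bdens
  exact continuous_const.mul ((Real.continuous_exp.comp (((continuous_norm.pow 2).neg).div_const ℏ)))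

lemma bargmann_eq (ℏ : ℝ) :
    bargmannMeasure ℏ = volume.withDensity (fun z => (Real.toNNReal (bdens ℏ z) : ENNReal)) := rfl

lemma bargmann_integral {ℏ : ℝ} (hℏ : 0 < ℏ) (g : ℂ → ℂ) :
    ∫ w, g w ∂(bargmannMeasure ℏ) = ∫ w, bdens ℏ w • g w := by
  rw [bargmann_eq, integral_withDensity_eq_integral_smul
    ((bdens_continuous ℏ).measurable.real_toNNReal) g]
  congr 1 with w
  rw [NNReal.smul_def, Real.coe_toNNReal _ (bdens_nonneg hℏ w)]

lemma bargmann_integrable_iff {E : Type*} [NormedAddCommGroup E] [NormedSpace ℝ E]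
    {ℏ : ℝ} (hℏ : 0 < ℏ) (g : ℂ → E) :
    Integrable g (bargmannMeasure ℏ) ↔ Integrable (fun w => bdens ℏ w • g w) volume := by
  rw [bargmann_eq, integrable_withDensity_iff_integrable_smul
    ((bdens_continuous ℏ).measurable.real_toNNReal)]
  constructor <;> intro h <;> refine h.congr (Eventually.of_forall fun w => ?_) <;>
    simp only [NNReal.smul_def, Real.coe_toNNReal _ (bdens_nonneg hℏ w)]


lemma integrable_gauss {c : ℝ} (hc : 0 < c) :
    Integrable (fun v : ℂ => Real.exp (-c * ‖v‖ ^ 2)) volume := by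
  have h := (GaussianFourier.integrable_cexp_neg_mul_sq_norm_add (V := ℂ)
    (b := (c : ℂ)) (by simpa using hc) 0 0).norm
  refine h.congr (Eventually.of_forall fun v => ?_)
  simp only [Complex.norm_exp]
  norm_num [← Complex.ofReal_pow]

lemma gauss_exp_bound {ℏ : ℝ} (hℏ : 0 < ℏ) (b r : ℝ) :
    Real.exp (b * r - r ^ 2 / ℏ) ≤ Real.exp (b ^ 2 * ℏ / 2) * Real.exp (-(2 * ℏ)⁻¹ * r ^ 2) := by
  rw [← Real.exp_add]
  apply Real.exp_le_exp.2
  have h := sq_nonneg (r - b * ℏ)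
  have hi : r ^ 2 / ℏ = r ^ 2 * ℏ⁻¹ := div_eq_mul_inv _ _
  have h2 : (2 * ℏ)⁻¹ = 2⁻¹ * ℏ⁻¹ := by rw [mul_inv]
  have hℏ' : 0 < ℏ⁻¹ := by positivity
  have hinv : ℏ⁻¹ * ℏ = 1 := inv_mul_cancel₀ (ne_of_gt hℏ)
  have key : (b * r - b ^ 2 * ℏ / 2 - 2⁻¹ * r ^ 2 * ℏ⁻¹) * ℏ ≤ 0 := by nlinarith
  have he : b * r - b ^ 2 * ℏ / 2 - 2⁻¹ * r ^ 2 * ℏ⁻¹ ≤ 0 := by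
    rcases mul_nonpos_iff.1 key with ⟨_, h'⟩ | ⟨h', _⟩
    · linarith
    · exact h'
  rw [hi, h2]
  linarith

lemma pow_le_factorial_mul_exp (N : ℕ) {r : ℝ} (hr : 0 ≤ r) :
    r ^ N ≤ (N.factorial : ℝ) * Real.exp r := by
  have h1 : r ^ N / (N.factorial : ℝ) ≤ Real.exp r := by
    calc r ^ N / (N.factorial : ℝ) ≤ ∑ i ∈ Finset.range (N + 1), r ^ i / i.factorial := by
          exact Finset.single_le_sum (f := fun i => r ^ i / (i.factorial : ℝ))
            (fun i _ => by positivity) (Finset.self_mem_range_succ N)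
      _ ≤ Real.exp r := Real.sum_le_exp_of_nonneg hr _
  have hN : (0:ℝ) < N.factorial := by exact_mod_cast N.factorial_pos
  calc r ^ N = (N.factorial : ℝ) * (r ^ N / N.factorial) := by field_simp
    _ ≤ (N.factorial : ℝ) * Real.exp r := by
        exact mul_le_mul_of_nonneg_left h1 hN.le

lemma integrable_gauss_poly {ℏ : ℝ} (hℏ : 0 < ℏ) (b : ℝ) (N : ℕ) :
    Integrable (fun w : ℂ => ‖w‖ ^ N * Real.exp (b * ‖w‖ - ‖w‖ ^ 2 / ℏ)) volume := by
  have h2ℏ : (0:ℝ) < (2 * ℏ)⁻¹ := by positivity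
  have hint := (integrable_gauss h2ℏ).const_mul
    ((N.factorial : ℝ) * Real.exp ((b + 1) ^ 2 * ℏ / 2))
  refine hint.mono ?_ (Eventually.of_forall fun w => ?_)
  · exact (((continuous_norm.pow N).mul (Real.continuous_exp.comp
      (by continuity))).aestronglyMeasurable)
  · have hr : (0:ℝ) ≤ ‖w‖ := norm_nonneg w
    have h1 : ‖w‖ ^ N * Real.exp (b * ‖w‖ - ‖w‖ ^ 2 / ℏ)
        ≤ (N.factorial : ℝ) * Real.exp ((b + 1) * ‖w‖ - ‖w‖ ^ 2 / ℏ) := by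
      calc ‖w‖ ^ N * Real.exp (b * ‖w‖ - ‖w‖ ^ 2 / ℏ)
          ≤ ((N.factorial : ℝ) * Real.exp ‖w‖) * Real.exp (b * ‖w‖ - ‖w‖ ^ 2 / ℏ) :=
            mul_le_mul_of_nonneg_right (pow_le_factorial_mul_exp N hr) (Real.exp_pos _).le
        _ = (N.factorial : ℝ) * Real.exp ((b + 1) * ‖w‖ - ‖w‖ ^ 2 / ℏ) := by
            rw [mul_assoc, ← Real.exp_add]; ring_nf
    have h2 : Real.exp ((b + 1) * ‖w‖ - ‖w‖ ^ 2 / ℏ)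
        ≤ Real.exp ((b + 1) ^ 2 * ℏ / 2) * Real.exp (-(2 * ℏ)⁻¹ * ‖w‖ ^ 2) :=
      gauss_exp_bound hℏ (b + 1) ‖w‖
    have hb : (0:ℝ) ≤ ‖w‖ ^ N * Real.exp (b * ‖w‖ - ‖w‖ ^ 2 / ℏ) := by positivity
    rw [Real.norm_of_nonneg hb, Real.norm_of_nonneg (by positivity)]
    calc ‖w‖ ^ N * Real.exp (b * ‖w‖ - ‖w‖ ^ 2 / ℏ)
        ≤ (N.factorial : ℝ) * Real.exp ((b + 1) * ‖w‖ - ‖w‖ ^ 2 / ℏ) := h1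
      _ ≤ (N.factorial : ℝ) * (Real.exp ((b + 1) ^ 2 * ℏ / 2)
            * Real.exp (-(2 * ℏ)⁻¹ * ‖w‖ ^ 2)) :=
          mul_le_mul_of_nonneg_left h2 (by positivity)
      _ = (N.factorial : ℝ) * Real.exp ((b + 1) ^ 2 * ℏ / 2)
            * Real.exp (-(2 * ℏ)⁻¹ * ‖w‖ ^ 2) := by ring


lemma key_int {ℏ : ℝ} {ψ : ℂ → ℂ} (hℏ : 0 < ℏ) (hψc : Continuous ψ)
    (hψ2 : Integrable (fun w => ‖ψ w‖ ^ 2) (bargmannMeasure ℏ)) (b : ℝ) (N : ℕ) :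
    Integrable (fun w => Real.exp (b * ‖w‖) * ‖w‖ ^ N * ‖ψ w‖) (bargmannMeasure ℏ) := by
  set G : ℂ → ℝ := fun w => Real.exp (b * ‖w‖) * ‖w‖ ^ N with hG
  have hGc : Continuous G := by
    exact (Real.continuous_exp.comp (continuous_const.mul continuous_norm)).mul
      (continuous_norm.pow N)
  have hG2 : Integrable (fun w => G w ^ 2) (bargmannMeasure ℏ) := by
    rw [bargmann_integrable_iff hℏ]
    have hint := ((integrable_gauss_poly hℏ (2 * b) (2 * N)).const_mul (Real.pi * ℏ)⁻¹)
    refine hint.congr (Eventually.of_forall fun w => ?_)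
    show (Real.pi * ℏ)⁻¹ * (‖w‖ ^ (2 * N) * Real.exp (2 * b * ‖w‖ - ‖w‖ ^ 2 / ℏ))
        = bdens ℏ w • G w ^ 2
    rw [smul_eq_mul]
    simp only [G]
    unfold bdens
    rw [mul_pow, ← pow_mul, ← Real.exp_nat_mul, Real.exp_sub,
        neg_div, Real.exp_neg]
    push_cast
    rw [mul_comm N 2]
    field_simp [Real.exp_ne_zero]
  have hψsq : Integrable (fun w => (G w ^ 2 + ‖ψ w‖ ^ 2) / 2) (bargmannMeasure ℏ) :=
    (hG2.add hψ2).div_const 2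
  refine hψsq.mono ?_ (Eventually.of_forall fun w => ?_)
  · exact (hGc.mul hψc.norm).aestronglyMeasurable
  · have hGnn : 0 ≤ G w := by unfold G; positivity
    have h1 : G w * ‖ψ w‖ ≤ (G w ^ 2 + ‖ψ w‖ ^ 2) / 2 := by nlinarith [sq_nonneg (G w - ‖ψ w‖)]
    rw [Real.norm_of_nonneg (by positivity), Real.norm_of_nonneg (by positivity)]
    exact h1

lemma toeplitz_integrable {ℏ : ℝ} {ψ : ℂ → ℂ} (hℏ : 0 < ℏ) (hψc : Continuous ψ)
    (hψ2 : Integrable (fun w => ‖ψ w‖ ^ 2) (bargmannMeasure ℏ)) (m n : ℕ) (z : ℂ) :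
    Integrable (fun w => Complex.exp (z * (starRingEnd ℂ) w / (ℏ:ℂ))
      * (w ^ m * (starRingEnd ℂ) w ^ n * ψ w)) (bargmannMeasure ℏ) := by
  refine (key_int hℏ hψc hψ2 (‖z‖ / ℏ) (m + n)).mono ?_ (Eventually.of_forall fun w => ?_)
  · have hconj : Continuous fun w : ℂ => (starRingEnd ℂ) w := by
      simp only [starRingEnd_apply]; exact continuous_star
    apply Continuous.aestronglyMeasurable
    apply Continuous.mul
    · exact Complex.continuous_exp.comp ((continuous_const.mul hconj).div_const _)
    · exact ((continuous_pow m).mul (hconj.pow n)).mul hψc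
  · have hre : (z * (starRingEnd ℂ) w / (ℏ:ℂ)).re ≤ ‖z‖ / ℏ * ‖w‖ := by
      refine (Complex.re_le_norm _).trans (le_of_eq ?_)
      rw [norm_div, norm_mul, Complex.norm_conj, Complex.norm_real, Real.norm_eq_abs, abs_of_pos hℏ]
      ring
    have hrhs : Real.exp (‖z‖ / ℏ * ‖w‖) * ‖w‖ ^ (m + n) * ‖ψ w‖
        = Real.exp (‖z‖ / ℏ * ‖w‖) * (‖w‖ ^ m * ‖w‖ ^ n * ‖ψ w‖) := by
      rw [pow_add]; ring
    rw [Real.norm_of_nonneg (by positivity), hrhs]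
    simp only [norm_mul, norm_pow, Complex.norm_exp, Complex.norm_conj]
    have hX : (0:ℝ) ≤ ‖w‖ ^ m * ‖w‖ ^ n * ‖ψ w‖ := by positivity
    calc Real.exp ((z * (starRingEnd ℂ) w / (ℏ:ℂ)).re) * (‖w‖ ^ m * ‖w‖ ^ n * ‖ψ w‖)
        ≤ Real.exp (‖z‖ / ℏ * ‖w‖) * (‖w‖ ^ m * ‖w‖ ^ n * ‖ψ w‖) :=
          mul_le_mul_of_nonneg_right (Real.exp_le_exp.2 hre) hX
      _ = _ := rfl


lemma circle_mean (g : ℂ → ℂ) (hg : Differentiable ℂ g) {r : ℝ} (hr : 0 < r) :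
    ∫ θ in Ioo (-Real.pi) Real.pi, g (Complex.polarCoord.symm (r, θ)) = (2 * Real.pi) • g 0 := by
  have key := Complex.two_pi_I_inv_smul_circleIntegral_sub_inv_smul_of_differentiable_on_off_countable
      (R := r) (c := 0) (w := 0) (s := ∅) Set.countable_empty
      (by simpa using hr) hg.continuous.continuousOn (fun x _ => hg.differentiableAt)
  set J : ℂ := ∫ θ in (0:ℝ)..2*Real.pi, g (circleMap 0 r θ) with hJ
  have hC : (∮ ζ in C(0, r), (ζ - 0)⁻¹ • g ζ) = Complex.I * J := by
    rw [circleIntegral, ← intervalIntegral.integral_const_mul]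
    refine intervalIntegral.integral_congr fun θ _ => ?_
    have hne : circleMap 0 r θ ≠ 0 := circleMap_ne_center (c := 0) (ne_of_gt hr) (θ := θ)
    rw [deriv_circleMap, smul_eq_mul, smul_eq_mul, sub_zero]
    field_simp
  rw [hC, smul_eq_mul] at key
  have hπ : (Real.pi : ℂ) ≠ 0 := by exact_mod_cast Real.pi_ne_zero
  have hJval : J = ((2 * Real.pi : ℝ) : ℂ) * g 0 := by
    have h1 : ((2 * (Real.pi:ℂ) * Complex.I))⁻¹ * (Complex.I * J) = J / (2 * Real.pi) := by
      field_simp [Complex.I_ne_zero]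
    rw [h1] at key
    field_simp at key
    push_cast
    rw [key]
  have hsymm : ∀ θ : ℝ, Complex.polarCoord.symm (r, θ) = circleMap 0 r θ := fun θ => by
    simp [circleMap, Complex.exp_mul_I, Complex.polarCoord_symm_apply]
  have hle : -Real.pi ≤ Real.pi := by linarith [Real.pi_pos]
  have hper : Function.Periodic (fun θ : ℝ => g (circleMap 0 r θ)) (2 * Real.pi) :=
    (periodic_circleMap 0 r).comp g
  have hIoo : ∫ θ in Ioo (-Real.pi) Real.pi, g (Complex.polarCoord.symm (r, θ))
      = ∫ θ in (-Real.pi)..Real.pi, g (circleMap 0 r θ) := by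
    rw [intervalIntegral.integral_of_le hle, ← MeasureTheory.integral_Ioc_eq_integral_Ioo]
    refine setIntegral_congr_fun measurableSet_Ioc fun θ _ => by rw [hsymm θ]
  have hshift : ∫ θ in (-Real.pi)..Real.pi, g (circleMap 0 r θ) = J := by
    have h := hper.intervalIntegral_add_eq (-Real.pi) 0
    rw [zero_add] at h
    have h2 : -Real.pi + 2 * Real.pi = Real.pi := by ring
    rw [h2] at h
    rw [h, hJ]
  rw [hIoo, hshift, hJval]
  rw [Complex.real_smul]

open Real in
lemma integrableOn_comp_polarCoord_symm {E : Type*} [NormedAddCommGroup E] [NormedSpace ℝ E]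
    (f : ℝ × ℝ → E) (hf : Integrable f volume) :
    IntegrableOn (fun p : ℝ × ℝ => p.1 • f (polarCoord.symm p)) polarCoord.target := by
  set B : ℝ × ℝ → ℝ × ℝ →L[ℝ] ℝ × ℝ := fun p =>
    LinearMap.toContinuousLinearMap (Matrix.toLin (Module.Basis.finTwoProd ℝ) (Module.Basis.finTwoProd ℝ)
      !![Real.cos p.2, -p.1 * Real.sin p.2; Real.sin p.2, p.1 * Real.cos p.2]) with hB
  have A : ∀ p ∈ polarCoord.target, HasFDerivWithinAt polarCoord.symm (B p) polarCoord.target p :=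
    fun p _ => (hasFDerivAt_polarCoord_symm p).hasFDerivWithinAt
  have B_det : ∀ p, (B p).det = p.1 := by
    intro p
    conv_rhs => rw [← one_mul p.1, ← Real.cos_sq_add_sin_sq p.2]
    simp only [hB, neg_mul, LinearMap.det_toContinuousLinearMap, LinearMap.det_toLin,
      Matrix.det_fin_two_of, sub_neg_eq_add]
    ring
  have hinj : Set.InjOn polarCoord.symm polarCoord.target := by
    have h := polarCoord.symm.injOn
    rwa [OpenPartialHomeomorph.symm_source] at h
  have h := integrableOn_image_iff_integrableOn_abs_det_fderiv_smul volume
    polarCoord.open_target.measurableSet A hinj f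
  rw [polarCoord.symm_image_target_eq_source] at h
  have hsrc : IntegrableOn f polarCoord.source := hf.integrableOn
  refine (h.mp hsrc).congr_fun (fun p hp => ?_) polarCoord.open_target.measurableSet
  dsimp only
  rw [B_det, abs_of_pos hp.1]

lemma integrableOn_comp_complex_polarCoord_symm {E : Type*} [NormedAddCommGroup E]
    [NormedSpace ℝ E] (f : ℂ → E) (hf : Integrable f volume) :
    IntegrableOn (fun p : ℝ × ℝ => p.1 • f (Complex.polarCoord.symm p)) polarCoord.target := by
  have h0 : Integrable (fun p : ℝ × ℝ => f (Complex.measurableEquivRealProd.symm p)) volume :=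
    (MeasurePreserving.integrable_comp_emb
      (Complex.volume_preserving_equiv_real_prod.symm)
      Complex.measurableEquivRealProd.symm.measurableEmbedding).mpr hf
  have harg : ∀ p : ℝ × ℝ,
      Complex.measurableEquivRealProd.symm (polarCoord.symm p) = Complex.polarCoord.symm p := by
    intro p
    apply Complex.ext <;>
      simp [Complex.measurableEquivRealProd_symm_apply, polarCoord_symm_apply,
        Complex.polarCoord_symm_apply, ← Complex.ofReal_cos, ← Complex.ofReal_sin]
  refine (integrableOn_comp_polarCoord_symm _ h0).congr_fun (fun p _ => ?_)
    polarCoord.open_target.measurableSet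
  simp only [harg p]

lemma radial {ℏ : ℝ} (hℏ : 0 < ℏ) :
    ∫ r in Ioi (0:ℝ), r * Real.exp (-r ^ 2 / ℏ) = ℏ / 2 := by
  have h2ℏ : (0:ℝ) < (2 * ℏ)⁻¹ := by positivity
  have hderiv : ∀ x ∈ Ici (0:ℝ),
      HasDerivAt (fun r : ℝ => -ℏ / 2 * Real.exp (-r ^ 2 / ℏ)) (x * Real.exp (-x ^ 2 / ℏ)) x := by
    intro x _
    have h1 : HasDerivAt (fun r : ℝ => -r ^ 2 / ℏ) (-(2 * x) / ℏ) x := by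
      have := ((hasDerivAt_pow 2 x).neg).div_const ℏ
      simpa using this
    have h2 := (h1.exp).const_mul (-ℏ / 2)
    refine h2.congr_deriv ?_
    have hℏne : ℏ ≠ 0 := hℏ.ne'
    field_simp
  have hti : Tendsto (fun r : ℝ => -ℏ / 2 * Real.exp (-r ^ 2 / ℏ)) atTop (𝓝 0) := by
    have h1 : Tendsto (fun r : ℝ => r ^ 2 / ℏ) atTop atTop :=
      (tendsto_pow_atTop (two_ne_zero)).atTop_div_const hℏ
    have h2 : Tendsto (fun r : ℝ => -r ^ 2 / ℏ) atTop atBot := by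
      simp only [neg_div]
      exact tendsto_neg_atBot_iff.mpr h1
    have h3 : Tendsto (fun r : ℝ => Real.exp (-r ^ 2 / ℏ)) atTop (𝓝 0) :=
      Real.tendsto_exp_atBot.comp h2
    have h4 := h3.const_mul (-ℏ / 2)
    simpa using h4
  have hint : IntegrableOn (fun r : ℝ => r * Real.exp (-r ^ 2 / ℏ)) (Ioi 0) := by
    have hmaj := ((integrable_exp_neg_mul_sq h2ℏ).const_mul
      (Real.exp (1 ^ 2 * ℏ / 2))).integrableOn (s := Ioi (0:ℝ))
    refine Integrable.mono hmaj ?_ ?_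
    · exact (continuous_id.mul (Real.continuous_exp.comp
        (((continuous_pow 2).neg).div_const ℏ))).aestronglyMeasurable
    · filter_upwards [ae_restrict_mem measurableSet_Ioi] with r hr
      have hr0 : (0:ℝ) < r := hr
      rw [Real.norm_of_nonneg (by positivity), Real.norm_of_nonneg (by positivity)]
      have hrle : r ≤ Real.exp r := by
        have := Real.add_one_le_exp r
        linarith
      have step1 : r * Real.exp (-r ^ 2 / ℏ) ≤ Real.exp (1 * r - r ^ 2 / ℏ) := by
        have hE : Real.exp (1 * r - r ^ 2 / ℏ) = Real.exp r * Real.exp (-r ^ 2 / ℏ) := by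
          rw [← Real.exp_add]; ring_nf
        rw [hE]
        exact mul_le_mul_of_nonneg_right hrle (Real.exp_pos _).le
      exact step1.trans (gauss_exp_bound hℏ 1 r)
  have hkey := integral_Ioi_of_hasDerivAt_of_tendsto'
    (fun x hx => hderiv x hx) hint hti
  rw [hkey]
  norm_num
  ring


lemma gaussian_mean {ℏ : ℝ} (hℏ : 0 < ℏ) (g : ℂ → ℂ) (hg : Differentiable ℂ g)
    (hint : Integrable (fun u : ℂ => Real.exp (-‖u‖ ^ 2 / ℏ) • g u) volume) :
    ∫ u : ℂ, Real.exp (-‖u‖ ^ 2 / ℏ) • g u = (Real.pi * ℏ) • g 0 := by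
  set f : ℂ → ℂ := fun u => Real.exp (-‖u‖ ^ 2 / ℏ) • g u with hf
  rw [← Complex.integral_comp_polarCoord_symm f]
  have hI : IntegrableOn (fun p : ℝ × ℝ => p.1 • f (Complex.polarCoord.symm p))
      polarCoord.target := integrableOn_comp_complex_polarCoord_symm f hint
  rw [polarCoord_target] at hI ⊢
  rw [show (volume : Measure (ℝ × ℝ)) = (volume : Measure ℝ).prod volume from Measure.volume_eq_prod ℝ ℝ] at hI ⊢
  rw [setIntegral_prod _ hI]
  have hin : ∀ r ∈ Ioi (0:ℝ), (∫ θ in Ioo (-Real.pi) Real.pi,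
        (r, θ).1 • f (Complex.polarCoord.symm (r, θ)))
      = (2 * Real.pi * (r * Real.exp (-r ^ 2 / ℏ))) • g 0 := by
    intro r hr
    have hr0 : (0:ℝ) < r := hr
    have habs : ∀ θ : ℝ, ‖Complex.polarCoord.symm (r, θ)‖ = r := fun θ => by
      rw [Complex.norm_polarCoord_symm]
      exact abs_of_pos hr0
    calc ∫ θ in Ioo (-Real.pi) Real.pi, (r, θ).1 • f (Complex.polarCoord.symm (r, θ))
        = ∫ θ in Ioo (-Real.pi) Real.pi,
            (r * Real.exp (-r ^ 2 / ℏ)) • g (Complex.polarCoord.symm (r, θ)) := by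
          refine setIntegral_congr_fun measurableSet_Ioo fun θ _ => ?_
          simp only [hf, habs θ, smul_smul]
      _ = (r * Real.exp (-r ^ 2 / ℏ)) •
            ∫ θ in Ioo (-Real.pi) Real.pi, g (Complex.polarCoord.symm (r, θ)) :=
          integral_smul _ _
      _ = (r * Real.exp (-r ^ 2 / ℏ)) • ((2 * Real.pi) • g 0) := by
          rw [circle_mean g hg hr0]
      _ = (2 * Real.pi * (r * Real.exp (-r ^ 2 / ℏ))) • g 0 := by
          rw [smul_smul]; ring_nf
  rw [setIntegral_congr_fun measurableSet_Ioi hin]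
  rw [integral_smul_const]
  have : ∫ r in Ioi (0:ℝ), 2 * Real.pi * (r * Real.exp (-r ^ 2 / ℏ))
      = Real.pi * ℏ := by
    rw [integral_const_mul, radial hℏ]
    ring
  rw [this]


lemma reproducing {ℏ : ℝ} (hℏ : 0 < ℏ) (f : ℂ → ℂ) (hf : Differentiable ℂ f) (z : ℂ)
    (hint : Integrable (fun w => Complex.exp (z * (starRingEnd ℂ) w / (ℏ:ℂ)) * f w)
      (bargmannMeasure ℏ)) :
    ∫ w, Complex.exp (z * (starRingEnd ℂ) w / (ℏ:ℂ)) * f w ∂(bargmannMeasure ℏ) = f z := by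
  have hπℏ : Real.pi * ℏ ≠ 0 := by positivity
  have hℏ0 : (ℏ:ℂ) ≠ 0 := by exact_mod_cast ne_of_gt hℏ
  set g : ℂ → ℂ := fun u => Complex.exp (-(u * (starRingEnd ℂ) z) / (ℏ:ℂ)) * f (u + z) with hg
  have hgd : Differentiable ℂ g := by
    apply Differentiable.mul
    · exact Complex.differentiable_exp.comp
        (((differentiable_id.mul_const _).neg).div_const _)
    · exact hf.comp (differentiable_id.add_const z)
  have hg0 : g 0 = f z := by simp [hg]
  have habs2 : ∀ w : ℂ, ((‖w‖ : ℂ)) ^ 2 = w * (starRingEnd ℂ) w := fun w => by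
    rw [← Complex.ofReal_pow, ← Complex.normSq_eq_norm_sq, Complex.mul_conj]
  have hiden : ∀ u : ℂ,
      bdens ℏ (u + z) • (Complex.exp (z * (starRingEnd ℂ) (u + z) / (ℏ:ℂ)) * f (u + z))
      = (Real.pi * ℏ)⁻¹ • (Real.exp (-‖u‖ ^ 2 / ℏ) • g u) := by
    intro u
    have hC : (Complex.exp ((-‖u + z‖ ^ 2 / ℏ : ℝ) : ℂ))
        * Complex.exp (z * (starRingEnd ℂ) (u + z) / (ℏ:ℂ))
        = (Complex.exp ((-‖u‖ ^ 2 / ℏ : ℝ) : ℂ))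
          * Complex.exp (-(u * (starRingEnd ℂ) z) / (ℏ:ℂ)) := by
      rw [← Complex.exp_add, ← Complex.exp_add]
      congr 1
      push_cast
      rw [← add_div, ← add_div]
      congr 1
      have h1 := habs2 (u + z)
      have h2 := habs2 u
      have h3 := map_add (starRingEnd ℂ) u z
      linear_combination -h1 + h2 - u * h3
    have hbd : bdens ℏ (u + z) = (Real.pi * ℏ)⁻¹ * Real.exp (-‖u + z‖ ^ 2 / ℏ) := rfl
    rw [hbd]
    simp only [hg, Complex.real_smul, Complex.ofReal_mul, Complex.ofReal_exp]
    calc (((Real.pi * ℏ)⁻¹ : ℝ) : ℂ) * Complex.exp ((-‖u + z‖ ^ 2 / ℏ : ℝ) : ℂ)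
          * (Complex.exp (z * (starRingEnd ℂ) (u + z) / (ℏ:ℂ)) * f (u + z))
        = (((Real.pi * ℏ)⁻¹ : ℝ) : ℂ) * ((Complex.exp ((-‖u + z‖ ^ 2 / ℏ : ℝ) : ℂ)
            * Complex.exp (z * (starRingEnd ℂ) (u + z) / (ℏ:ℂ))) * f (u + z)) := by
          push_cast
          ring
      _ = (((Real.pi * ℏ)⁻¹ : ℝ) : ℂ) * ((Complex.exp ((-‖u‖ ^ 2 / ℏ : ℝ) : ℂ)
            * Complex.exp (-(u * (starRingEnd ℂ) z) / (ℏ:ℂ))) * f (u + z)) := by rw [hC]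
      _ = _ := by push_cast; ring
  rw [bargmann_integral hℏ]
  have hvol : Integrable
      (fun w => bdens ℏ w • (Complex.exp (z * (starRingEnd ℂ) w / (ℏ:ℂ)) * f w)) volume :=
    (bargmann_integrable_iff hℏ _).1 hint
  rw [← integral_add_right_eq_self
    (fun w => bdens ℏ w • (Complex.exp (z * (starRingEnd ℂ) w / (ℏ:ℂ)) * f w)) z]
  simp only [hiden]
  rw [integral_smul]
  have hgi : Integrable (fun u : ℂ => Real.exp (-‖u‖ ^ 2 / ℏ) • g u) volume := by
    have h2 := (hvol.comp_add_right z).congr (Eventually.of_forall hiden)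
    have h3 := h2.smul (Real.pi * ℏ)
    refine h3.congr (Eventually.of_forall fun u => ?_)
    rw [Pi.smul_apply, smul_smul, mul_inv_cancel₀ hπℏ, one_smul]
  rw [gaussian_mean hℏ g hgd hgi, smul_smul, inv_mul_cancel₀ hπℏ, one_smul, hg0]


lemma diff_iter (f : ℂ → ℂ) (hf : Differentiable ℂ f) (n : ℕ) :
    Differentiable ℂ (deriv^[n] f) :=
  (ContDiff.iterate_deriv n (hf.contDiff)).differentiable (by simp)

lemma anti_wick {ℏ : ℝ} (hℏ : 0 < ℏ) {ψ : ℂ → ℂ} (hψ : Differentiable ℂ ψ)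
    (hψ2 : Integrable (fun w => ‖ψ w‖ ^ 2) (bargmannMeasure ℏ)) (m : ℕ) :
    ∀ (n : ℕ) (z : ℂ),
      ∫ w, Complex.exp (z * (starRingEnd ℂ) w / (ℏ:ℂ))
          * (w ^ m * (starRingEnd ℂ) w ^ n * ψ w) ∂(bargmannMeasure ℏ)
        = (ℏ:ℂ) ^ n * deriv^[n] (fun u : ℂ => u ^ m * ψ u) z := by
  have hℏ0 : (ℏ:ℂ) ≠ 0 := by exact_mod_cast ne_of_gt hℏ
  have hconj : Continuous fun w : ℂ => (starRingEnd ℂ) w := by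
    simp only [starRingEnd_apply]; exact continuous_star
  have hfd : Differentiable ℂ (fun u : ℂ => u ^ m * ψ u) := (differentiable_pow m).mul hψ
  intro n
  induction n with
  | zero =>
    intro z
    simp only [pow_zero, mul_one, Function.iterate_zero, id_eq, one_mul]
    have h := toeplitz_integrable hℏ hψ.continuous hψ2 m 0 z
    simp only [pow_zero, mul_one] at h
    exact reproducing hℏ _ hfd z h
  | succ n ih =>
    intro z
    have hcont : ∀ x : ℂ, Continuous fun w : ℂ =>
        Complex.exp (x * (starRingEnd ℂ) w / (ℏ:ℂ))
          * (w ^ m * (starRingEnd ℂ) w ^ n * ψ w) := fun x =>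
      (Complex.continuous_exp.comp ((continuous_const.mul hconj).div_const _)).mul
        (((continuous_pow m).mul (hconj.pow n)).mul hψ.continuous)
    have bound_int : Integrable (fun w : ℂ => ℏ⁻¹
        * (Real.exp ((‖z‖ + 1) / ℏ * ‖w‖) * ‖w‖ ^ (m + n + 1) * ‖ψ w‖))
        (bargmannMeasure ℏ) :=
      (key_int hℏ hψ.continuous hψ2 ((‖z‖ + 1) / ℏ) (m + n + 1)).const_mul ℏ⁻¹
    have key := hasDerivAt_integral_of_dominated_loc_of_deriv_le (𝕜 := ℂ)
      (μ := bargmannMeasure ℏ) (x₀ := z) (s := Metric.ball z 1)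
      (F := fun x w => Complex.exp (x * (starRingEnd ℂ) w / (ℏ:ℂ))
        * (w ^ m * (starRingEnd ℂ) w ^ n * ψ w))
      (F' := fun x w => ((starRingEnd ℂ) w / (ℏ:ℂ))
        * (Complex.exp (x * (starRingEnd ℂ) w / (ℏ:ℂ))
            * (w ^ m * (starRingEnd ℂ) w ^ n * ψ w)))
      (bound := fun w => ℏ⁻¹
        * (Real.exp ((‖z‖ + 1) / ℏ * ‖w‖) * ‖w‖ ^ (m + n + 1) * ‖ψ w‖))
      (Metric.ball_mem_nhds z one_pos)
      (Eventually.of_forall fun x => (hcont x).aestronglyMeasurable)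
      (toeplitz_integrable hℏ hψ.continuous hψ2 m n z)
      (((hconj.div_const _).mul (hcont z)).aestronglyMeasurable)
      (Eventually.of_forall fun w => ?_)
      bound_int
      (Eventually.of_forall fun w => ?_)
    · -- use `key`
      have kd2 : HasDerivAt
          (fun x : ℂ => (ℏ:ℂ) ^ n * deriv^[n] (fun u : ℂ => u ^ m * ψ u) x)
          (∫ w, ((starRingEnd ℂ) w / (ℏ:ℂ))
            * (Complex.exp (z * (starRingEnd ℂ) w / (ℏ:ℂ))
              * (w ^ m * (starRingEnd ℂ) w ^ n * ψ w)) ∂(bargmannMeasure ℏ)) z := by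
        refine HasDerivAt.congr_of_eventuallyEq key.2
          (Eventually.of_forall fun x => (ih x).symm)
      have hdI : deriv (fun x : ℂ => (ℏ:ℂ) ^ n
          * deriv^[n] (fun u : ℂ => u ^ m * ψ u) x) z
          = (ℏ:ℂ) ^ n * deriv^[n + 1] (fun u : ℂ => u ^ m * ψ u) z := by
        rw [deriv_const_mul _ ((diff_iter _ hfd n) z)]
        rw [Function.iterate_succ_apply']
      have hval := kd2.deriv
      rw [hdI] at hval
      have hIz : ∫ w, ((starRingEnd ℂ) w / (ℏ:ℂ))
            * (Complex.exp (z * (starRingEnd ℂ) w / (ℏ:ℂ))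
              * (w ^ m * (starRingEnd ℂ) w ^ n * ψ w)) ∂(bargmannMeasure ℏ)
          = (ℏ:ℂ)⁻¹ * ∫ w, Complex.exp (z * (starRingEnd ℂ) w / (ℏ:ℂ))
              * (w ^ m * (starRingEnd ℂ) w ^ (n + 1) * ψ w) ∂(bargmannMeasure ℏ) := by
        rw [← integral_const_mul]
        refine integral_congr_ae (Eventually.of_forall fun w => ?_)
        simp only [pow_succ]
        ring
      rw [hIz] at hval
      calc ∫ w, Complex.exp (z * (starRingEnd ℂ) w / (ℏ:ℂ))
              * (w ^ m * (starRingEnd ℂ) w ^ (n + 1) * ψ w) ∂(bargmannMeasure ℏ)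
          = (ℏ:ℂ) * ((ℏ:ℂ)⁻¹ * ∫ w, Complex.exp (z * (starRingEnd ℂ) w / (ℏ:ℂ))
              * (w ^ m * (starRingEnd ℂ) w ^ (n + 1) * ψ w) ∂(bargmannMeasure ℏ)) := by
            rw [← mul_assoc, mul_inv_cancel₀ hℏ0, one_mul]
        _ = (ℏ:ℂ) * ((ℏ:ℂ) ^ n * deriv^[n + 1] (fun u : ℂ => u ^ m * ψ u) z) := by
            rw [← hval]
        _ = (ℏ:ℂ) ^ (n + 1) * deriv^[n + 1] (fun u : ℂ => u ^ m * ψ u) z := by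
            rw [pow_succ]; ring
    · -- bound
      intro x hx
      have hxz : ‖x‖ ≤ ‖z‖ + 1 := by
        have h1 : ‖x - z‖ < 1 := mem_ball_iff_norm.mp hx
        calc ‖x‖ = ‖x - z + z‖ := by ring_nf
          _ ≤ ‖x - z‖ + ‖z‖ := norm_add_le _ _
          _ ≤ ‖z‖ + 1 := by linarith
      have hre : (x * (starRingEnd ℂ) w / (ℏ:ℂ)).re ≤ (‖z‖ + 1) / ℏ * ‖w‖ := by
        refine (Complex.re_le_norm _).trans ?_
        rw [norm_div, norm_mul, Complex.norm_conj, Complex.norm_real, Real.norm_eq_abs, abs_of_pos hℏ]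
        rw [div_mul_eq_mul_div]
        gcongr <;> first | exact hxz | exact hℏ.le | positivity
      simp only [norm_mul, norm_div, norm_pow, Complex.norm_conj,
        Complex.norm_real, Real.norm_eq_abs, Complex.norm_exp, abs_of_pos hℏ]
      have hw : ‖w‖ / ℏ * (Real.exp ((x * (starRingEnd ℂ) w / (ℏ:ℂ)).re)
            * (‖w‖ ^ m * ‖w‖ ^ n * ‖ψ w‖))
          = ℏ⁻¹ * (Real.exp ((x * (starRingEnd ℂ) w / (ℏ:ℂ)).re)
            * ‖w‖ ^ (m + n + 1) * ‖ψ w‖) := by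
        ring
      rw [hw]
      gcongr <;> first | exact hre | positivity
    · --差分 differentiability
      intro x _
      have h1 : HasDerivAt (fun y : ℂ => y * ((starRingEnd ℂ) w / (ℏ:ℂ)))
          ((starRingEnd ℂ) w / (ℏ:ℂ)) x := hasDerivAt_mul_const _
      have h2 := h1.cexp
      have h3 := h2.mul_const (w ^ m * (starRingEnd ℂ) w ^ n * ψ w)
      have h4 : ∀ y : ℂ, y * (starRingEnd ℂ) w / (ℏ:ℂ)
          = y * ((starRingEnd ℂ) w / (ℏ:ℂ)) := fun y => by rw [mul_div_assoc]
      simp only [h4]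
      refine h3.congr_deriv ?_
      ring

end BargmannAux

/-- Toeplitz quantization is anti-Wick ordered: for an entire function `ψ` square-integrable
with respect to `μ_ℏ` and natural numbers `m, n`,
`∫_ℂ exp(z conj(w)/ℏ) wᵐ conj(w)ⁿ ψ(w) dμ_ℏ(w) = ℏⁿ (d/dz)ⁿ [zᵐ ψ(z)]`. -/
theorem toeplitz_antiWick_ordering (ℏ : ℝ) (hℏ : 0 < ℏ) (ψ : ℂ → ℂ)
    (hψ : Differentiable ℂ ψ)
    (hψ2 : Integrable (fun w => ‖ψ w‖ ^ 2) (bargmannMeasure ℏ)) (m n : ℕ) (z : ℂ) :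
    ∫ w : ℂ, Complex.exp (z * (starRingEnd ℂ) w / (ℏ : ℂ)) * w ^ m *
        (starRingEnd ℂ) w ^ n * ψ w ∂(bargmannMeasure ℏ) =
      (ℏ : ℂ) ^ n * deriv^[n] (fun u : ℂ => u ^ m * ψ u) z := by
  have h := BargmannAux.anti_wick hℏ hψ hψ2 m n z
  simp_rw [mul_assoc] at h ⊢
  exact h
end

section
/- Position-to-momentum change of basis on the θ-torus is a discrete Fourier transform: let N be a positive integer, m ∈ ℤ, θ₁, θ₂ ∈ ℝ, and let φ : ℝ → ℂ be a Schwartz function. Then (1/√N)·e^{2πiθ₂m/N} ∑_{k∈ℤ} e^{2πiθ₂k} φ((m+θ₁)/N + k) = e^{−2πiθ₁θ₂/N} ∑_{n=0}^{N−1} (e^{−2πimn/N}/√N) · e^{−2πinθ₁/N} ∑_{k∈ℤ} e^{−2πiθ₁k} (𝓕φ)(−(θ₂ + n + Nk)), where 𝓕φ(ξ) = ∫_ℝ e^{−2πiξx} φ(x) dx is the Fourier transform and all series converge absolutely. -/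
open MeasureTheory Complex Real Filter Asymptotics

/-- The Fourier transform `𝓕φ(ξ) = ∫_ℝ e^{−2πiξx} φ(x) dx` of a Schwartz function. -/
noncomputable def schwartzFourier (φ : SchwartzMap ℝ ℂ) (ξ : ℝ) : ℂ :=
  ∫ x : ℝ, Complex.exp (-(2 * Real.pi * Complex.I * ξ * x)) * φ x

lemma norm_exp_re_zero {z : ℂ} (h : z.re = 0) : ‖Complex.exp z‖ = 1 := by
  rw [Complex.norm_exp, h, Real.exp_zero]

lemma affine_rpow_isBigO {c : ℝ} (hc : c ≠ 0) (d : ℝ) :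
    (fun x : ℝ => |d + c * x| ^ (-2 : ℝ)) =O[cocompact ℝ] (fun x : ℝ => |x| ^ (-2 : ℝ)) := by
  rw [isBigO_iff]
  refine ⟨(|c| / 2) ^ (-2 : ℝ), ?_⟩
  have hc' : 0 < |c| := abs_pos.mpr hc
  have hev : ∀ᶠ x : ℝ in cocompact ℝ, max 1 (2 * |d| / |c|) ≤ |x| := by
    rw [cocompact_eq_atBot_atTop, eventually_sup]
    constructor
    · filter_upwards [eventually_le_atBot (-(max 1 (2 * |d| / |c|)))] with x hx
      calc max 1 (2 * |d| / |c|) ≤ -x := by linarith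
        _ ≤ |x| := neg_le_abs x
    · filter_upwards [eventually_ge_atTop (max 1 (2 * |d| / |c|))] with x hx
      exact hx.trans (le_abs_self x)
  filter_upwards [hev] with x hx
  have hx1 : (1 : ℝ) ≤ |x| := le_trans (le_max_left _ _) hx
  have hx2 : 2 * |d| / |c| ≤ |x| := le_trans (le_max_right _ _) hx
  have hd : |d| ≤ |c| / 2 * |x| := by
    rw [div_le_iff₀ hc'] at hx2; nlinarith
  have hkey : |c| / 2 * |x| ≤ |d + c * x| := by
    have h1 : |c * x| ≤ |d + c * x| + |d| := by
      calc |c * x| = |(d + c * x) + (-d)| := by ring_nf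
        _ ≤ |d + c * x| + |(-d)| := abs_add_le _ _
        _ = |d + c * x| + |d| := by rw [abs_neg]
    rw [abs_mul] at h1
    nlinarith
  have hpos : 0 < |c| / 2 * |x| := by positivity
  have hb : |d + c * x| ^ (-2 : ℝ) ≤ (|c| / 2 * |x|) ^ (-2 : ℝ) :=
    Real.rpow_le_rpow_of_nonpos hpos hkey (by norm_num)
  rw [Real.norm_eq_abs, Real.norm_eq_abs, _root_.abs_of_nonneg (Real.rpow_nonneg (abs_nonneg _) _),
    _root_.abs_of_nonneg (Real.rpow_nonneg (abs_nonneg _) _)]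
  calc |d + c * x| ^ (-2 : ℝ) ≤ (|c| / 2 * |x|) ^ (-2 : ℝ) := hb
    _ = (|c| / 2) ^ (-2 : ℝ) * |x| ^ (-2 : ℝ) := Real.mul_rpow (by positivity) (abs_nonneg x)

lemma schwartz_affine_isBigO (ψ : SchwartzMap ℝ ℂ) {c : ℝ} (hc : c ≠ 0) (d : ℝ) :
    (fun x : ℝ => ψ (d + c * x)) =O[cocompact ℝ] (fun x : ℝ => |x| ^ (-2 : ℝ)) := by
  have h1 : (fun x : ℝ => ψ x) =O[cocompact ℝ] (fun x : ℝ => |x| ^ (-2 : ℝ)) := by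
    simpa [Real.norm_eq_abs] using ψ.isBigO_cocompact_rpow (-2)
  have ht : Tendsto (fun x : ℝ => d + c * x) (cocompact ℝ) (cocompact ℝ) := by
    have h0 : Tendsto (⇑((Homeomorph.mulLeft₀ c hc).trans (Homeomorph.addLeft d)))
        (cocompact ℝ) (cocompact ℝ) := by
      exact (Homeomorph.map_cocompact ((Homeomorph.mulLeft₀ c hc).trans
        (Homeomorph.addLeft d))).le
    exact h0.congr fun x => by simp [Homeomorph.trans_apply]
  have h2 := h1.comp_tendsto ht
  simp only [Function.comp_def] at h2
  exact h2.trans (affine_rpow_isBigO hc d)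

lemma schwartz_affine_summable (ψ : SchwartzMap ℝ ℂ) {c : ℝ} (hc : c ≠ 0) (d : ℝ) :
    Summable fun k : ℤ => ‖ψ (d + c * k)‖ := by
  have h := (schwartz_affine_isBigO ψ hc d).comp_tendsto Int.tendsto_coe_cofinite
  apply summable_of_isBigO (Real.summable_abs_int_rpow one_lt_two)
  simpa [Function.comp_def] using h.norm_left

lemma schwartzFourier_eq_fourierIntegral (φ : SchwartzMap ℝ ℂ) (ξ : ℝ) :
    schwartzFourier φ ξ = FourierTransform.fourier (fun x => φ x) ξ := by
  rw [Real.fourier_real_eq_integral_exp_smul]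
  unfold schwartzFourier
  congr 1
  funext x
  rw [smul_eq_mul]
  congr 1
  push_cast
  ring

noncomputable def posComb (φ : SchwartzMap ℝ ℂ) (θ₂ a : ℝ) : ℝ → ℂ :=
  fun x => Complex.exp (2 * Real.pi * Complex.I * θ₂ * x) * φ (a + x)

lemma posComb_fourier (φ : SchwartzMap ℝ ℂ) (θ₂ a ξ : ℝ) :
    FourierTransform.fourier (posComb φ θ₂ a) ξ =
      Complex.exp (2 * Real.pi * Complex.I * a * (ξ - θ₂)) * schwartzFourier φ (ξ - θ₂) := by
  rw [Real.fourier_real_eq_integral_exp_smul]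
  have key : (fun x : ℝ => Complex.exp (↑(-2 * Real.pi * x * ξ) * Complex.I) • posComb φ θ₂ a x)
      = fun x : ℝ => (fun y : ℝ => Complex.exp (2 * Real.pi * Complex.I * a * (ξ - θ₂)) *
          (Complex.exp (-(2 * Real.pi * Complex.I * ((ξ - θ₂ : ℝ) : ℂ) * y)) * φ y)) (a + x) := by
    funext x
    simp only [posComb, smul_eq_mul]
    rw [← mul_assoc, ← mul_assoc, ← Complex.exp_add, ← Complex.exp_add]
    congr 1
    push_cast
    ring
  rw [key, MeasureTheory.integral_add_left_eq_self
      (fun y : ℝ => Complex.exp (2 * Real.pi * Complex.I * a * ((ξ : ℂ) - θ₂)) *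
        (Complex.exp (-(2 * Real.pi * Complex.I * ((ξ - θ₂ : ℝ) : ℂ) * y)) * φ y)) a,
    MeasureTheory.integral_const_mul]
  rfl

lemma tsum_int_eq_sum_range {F : ℤ → ℂ} {N : ℕ} (hN : 0 < N) (hF : Summable F) :
    ∑' j : ℤ, F j = ∑ n ∈ Finset.range N, ∑' k : ℤ, F (-(k * N + n)) := by
  haveI : NeZero N := ⟨hN.ne'⟩
  set E : Fin N × ℤ ≃ ℤ :=
    (Equiv.prodComm (Fin N) ℤ).trans ((Int.divModEquiv N).symm.trans (Equiv.neg ℤ)) with hE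
  have hS : Summable fun c : Fin N × ℤ => F (E c) := E.summable_iff.mpr hF
  rw [← E.tsum_eq F, hS.tsum_prod' fun n => hS.prod_factor n,
    tsum_fintype, ← Fin.sum_univ_eq_sum_range (fun n => ∑' k : ℤ, F (-(k * N + n)))]
  refine Finset.sum_congr rfl fun i _ => tsum_congr fun k => ?_
  congr 1

lemma posComb_tsum (φ : SchwartzMap ℝ ℂ) (θ₂ a : ℝ) :
    ∑' k : ℤ, posComb φ θ₂ a k = ∑' j : ℤ, FourierTransform.fourier (posComb φ θ₂ a) j := by
  have hcont : Continuous (posComb φ θ₂ a) := by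
    unfold posComb
    fun_prop
  have hbig1 := schwartz_affine_isBigO φ one_ne_zero a
  simp only [one_mul] at hbig1
  have hbig2 := schwartz_affine_isBigO (SchwartzMap.fourierTransformCLM ℝ φ) one_ne_zero (-θ₂)
  simp only [one_mul] at hbig2
  have hO : posComb φ θ₂ a =O[cocompact ℝ] (fun x : ℝ => |x| ^ (-2 : ℝ)) := by
    refine IsBigO.trans (Asymptotics.isBigO_of_le _ fun x => ?_) hbig1
    simp only [posComb, norm_mul]
    rw [norm_exp_re_zero (by simp), one_mul]
  have hOF : FourierTransform.fourier (posComb φ θ₂ a) =O[cocompact ℝ]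
      (fun x : ℝ => |x| ^ (-2 : ℝ)) := by
    refine IsBigO.trans (Asymptotics.isBigO_of_le _ fun ξ => ?_) hbig2
    rw [posComb_fourier, norm_mul, norm_exp_re_zero (by simp), one_mul]
    have h1 : schwartzFourier φ (ξ - θ₂) = (SchwartzMap.fourierTransformCLM ℝ φ) (-θ₂ + ξ) := by
      rw [SchwartzMap.fourierTransformCLM_apply, schwartzFourier_eq_fourierIntegral, SchwartzMap.fourier_coe]
      norm_num [sub_eq_neg_add]
    rw [h1]
  have h := Real.tsum_eq_tsum_fourier_of_rpow_decay hcont one_lt_two hO hOF 0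
  simp only [QuotientAddGroup.mk_zero, fourier_eval_zero, mul_one, zero_add] at h
  exact h

/-- Position-to-momentum change of basis on the `θ`-torus is a discrete Fourier transform:
for `h = 1/N`, pairing the position-state comb `Φ_m^{(θ)}` and the combination
`e^{−2πiθ₁θ₂/N} ∑_n 𝓕_{mn} Φ̃_n^{(θ)}` of momentum-state combs with a Schwartz test function
`φ` gives the same value, and all the `ℤ`-indexed series converge absolutely. -/
theorem theta_torus_position_momentum_dft (N : ℕ) (hN : 0 < N) (m : ℤ) (θ₁ θ₂ : ℝ)
    (φ : SchwartzMap ℝ ℂ) :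
    (Summable fun k : ℤ =>
      ‖Complex.exp (2 * Real.pi * Complex.I * θ₂ * k) * φ (((m : ℝ) + θ₁) / N + k)‖) ∧
    (∀ n : ℕ, n < N → Summable fun k : ℤ =>
      ‖Complex.exp (-(2 * Real.pi * Complex.I * θ₁ * k)) *
        schwartzFourier φ (-(θ₂ + (n : ℝ) + (N : ℝ) * k))‖) ∧
    (1 / (Real.sqrt N : ℂ)) * Complex.exp (2 * Real.pi * Complex.I * θ₂ * m / N) *
        (∑' k : ℤ, Complex.exp (2 * Real.pi * Complex.I * θ₂ * k) *
          φ (((m : ℝ) + θ₁) / N + k)) =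
      Complex.exp (-(2 * Real.pi * Complex.I * θ₁ * θ₂ / N)) *
        ∑ n ∈ Finset.range N,
          (Complex.exp (-(2 * Real.pi * Complex.I * m * n / N)) / (Real.sqrt N : ℂ)) *
            Complex.exp (-(2 * Real.pi * Complex.I * n * θ₁ / N)) *
            ∑' k : ℤ, Complex.exp (-(2 * Real.pi * Complex.I * θ₁ * k)) *
              schwartzFourier φ (-(θ₂ + (n : ℝ) + (N : ℝ) * k)) := by
  have hNR : (N : ℝ) ≠ 0 := Nat.cast_ne_zero.mpr hN.ne'
  have hNC : (N : ℂ) ≠ 0 := Nat.cast_ne_zero.mpr hN.ne'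
  set a : ℝ := ((m : ℝ) + θ₁) / N with ha
  have haC : (a : ℂ) = ((m : ℂ) + θ₁) / N := by rw [ha]; push_cast; ring
  have hpt : ∀ x : ℝ, schwartzFourier φ x = (SchwartzMap.fourierTransformCLM ℝ φ) x := by
    intro x
    rw [SchwartzMap.fourierTransformCLM_apply, schwartzFourier_eq_fourierIntegral, SchwartzMap.fourier_coe]
  refine ⟨?_, ?_, ?_⟩
  · refine (schwartz_affine_summable φ one_ne_zero a).congr fun k => ?_
    have hu : ‖Complex.exp (2 * Real.pi * Complex.I * θ₂ * (k : ℂ))‖ = 1 :=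
      norm_exp_re_zero (by simp)
    rw [one_mul, norm_mul, hu, one_mul]
  · intro n hn
    have hc : (-(N : ℝ)) ≠ 0 := neg_ne_zero.mpr hNR
    refine (schwartz_affine_summable (SchwartzMap.fourierTransformCLM ℝ φ) hc
      (-(θ₂ + n))).congr fun k => ?_
    have hu : ‖Complex.exp (-(2 * Real.pi * Complex.I * θ₁ * (k : ℂ)))‖ = 1 :=
      norm_exp_re_zero (by simp)
    have harg : (-(θ₂ + (n : ℝ)) + -(N : ℝ) * k) = -(θ₂ + (n : ℝ) + (N : ℝ) * k) := by ring
    rw [norm_mul, hu, one_mul, harg, hpt]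
  · have hcomb : (fun k : ℤ => Complex.exp (2 * Real.pi * Complex.I * θ₂ * (k : ℂ)) *
        φ (a + (k : ℝ))) = fun k : ℤ => posComb φ θ₂ a (k : ℝ) := by
      funext k
      simp only [posComb]
      norm_cast
    have hsummFg : Summable fun j : ℤ => FourierTransform.fourier (posComb φ θ₂ a) (j : ℝ) := by
      apply Summable.of_norm
      refine (schwartz_affine_summable (SchwartzMap.fourierTransformCLM ℝ φ) one_ne_zero
        (-θ₂)).congr fun j => ?_
      have hu : ‖Complex.exp (2 * Real.pi * Complex.I * (a : ℂ) * ((j : ℝ) - (θ₂ : ℝ) : ℂ))‖ = 1 :=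
        norm_exp_re_zero (by simp)
      rw [posComb_fourier, norm_mul]
      rw [show (-θ₂ + 1 * (j : ℝ)) = ((j : ℝ) - θ₂) by ring, hpt]
      rw [norm_exp_re_zero (by simp), one_mul]
    have key : ∀ (n : ℕ), n ∈ Finset.range N → ∀ (k : ℤ),
        (1 / (Real.sqrt N : ℂ)) * Complex.exp (2 * Real.pi * Complex.I * θ₂ * m / N) *
          FourierTransform.fourier (posComb φ θ₂ a) (((-(k * (N : ℤ) + (n : ℤ))) : ℤ) : ℝ)
        = (Complex.exp (-(2 * Real.pi * Complex.I * θ₁ * θ₂ / N)) *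
            (Complex.exp (-(2 * Real.pi * Complex.I * m * n / N)) / (Real.sqrt N : ℂ)) *
            Complex.exp (-(2 * Real.pi * Complex.I * n * θ₁ / N))) *
            (Complex.exp (-(2 * Real.pi * Complex.I * θ₁ * k)) *
              schwartzFourier φ (-(θ₂ + (n : ℝ) + (N : ℝ) * k))) := by
      intro n hn k
      rw [posComb_fourier]
      have harg : ((((-(k * (N : ℤ) + (n : ℤ))) : ℤ) : ℝ)) - θ₂
          = -(θ₂ + (n : ℝ) + (N : ℝ) * k) := by push_cast; ring
      rw [harg]
      have h1 : Complex.exp (2 * Real.pi * Complex.I * θ₂ * m / N) *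
          Complex.exp (2 * Real.pi * Complex.I * (a : ℂ) *
            (((((-(k * (N : ℤ) + (n : ℤ))) : ℤ) : ℝ) : ℂ) - (θ₂ : ℂ)))
          = Complex.exp (-(2 * Real.pi * Complex.I * θ₁ * θ₂ / N)) *
            Complex.exp (-(2 * Real.pi * Complex.I * m * n / N)) *
            Complex.exp (-(2 * Real.pi * Complex.I * n * θ₁ / N)) *
            Complex.exp (-(2 * Real.pi * Complex.I * θ₁ * k)) *
            Complex.exp (((-(m * k) : ℤ) : ℂ) * (2 * Real.pi * Complex.I)) := by
        simp only [← Complex.exp_add]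
        congr 1
        rw [haC]
        push_cast
        field_simp
        ring
      calc (1 / (Real.sqrt N : ℂ)) * Complex.exp (2 * Real.pi * Complex.I * θ₂ * m / N) *
            (Complex.exp (2 * Real.pi * Complex.I * (a : ℂ) *
              (((((-(k * (N : ℤ) + (n : ℤ))) : ℤ) : ℝ) : ℂ) - (θ₂ : ℂ))) *
              schwartzFourier φ (-(θ₂ + (n : ℝ) + (N : ℝ) * k)))
          = (Complex.exp (2 * Real.pi * Complex.I * θ₂ * m / N) *
              Complex.exp (2 * Real.pi * Complex.I * (a : ℂ) *
                (((((-(k * (N : ℤ) + (n : ℤ))) : ℤ) : ℝ) : ℂ) - (θ₂ : ℂ)))) *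
              schwartzFourier φ (-(θ₂ + (n : ℝ) + (N : ℝ) * k)) * (1 / (Real.sqrt N : ℂ)) := by
            ring
        _ = (Complex.exp (-(2 * Real.pi * Complex.I * θ₁ * θ₂ / N)) *
              Complex.exp (-(2 * Real.pi * Complex.I * m * n / N)) *
              Complex.exp (-(2 * Real.pi * Complex.I * n * θ₁ / N)) *
              Complex.exp (-(2 * Real.pi * Complex.I * θ₁ * k)) * 1) *
              schwartzFourier φ (-(θ₂ + (n : ℝ) + (N : ℝ) * k)) * (1 / (Real.sqrt N : ℂ)) := by
            rw [h1, Complex.exp_int_mul_two_pi_mul_I]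
        _ = _ := by ring
    calc (1 / (Real.sqrt N : ℂ)) * Complex.exp (2 * Real.pi * Complex.I * θ₂ * m / N) *
        (∑' k : ℤ, Complex.exp (2 * Real.pi * Complex.I * θ₂ * (k : ℂ)) * φ (a + (k : ℝ)))
        = (1 / (Real.sqrt N : ℂ)) * Complex.exp (2 * Real.pi * Complex.I * θ₂ * m / N) *
          ∑ n ∈ Finset.range N, ∑' k : ℤ,
            FourierTransform.fourier (posComb φ θ₂ a) (((-(k * (N : ℤ) + (n : ℤ))) : ℤ) : ℝ) := by
          rw [tsum_congr fun k => congrFun hcomb k, posComb_tsum φ θ₂ a,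
            tsum_int_eq_sum_range hN hsummFg]
      _ = ∑ n ∈ Finset.range N,
            (1 / (Real.sqrt N : ℂ)) * Complex.exp (2 * Real.pi * Complex.I * θ₂ * m / N) *
            ∑' k : ℤ,
              FourierTransform.fourier (posComb φ θ₂ a) (((-(k * (N : ℤ) + (n : ℤ))) : ℤ) : ℝ) := by
          rw [Finset.mul_sum]
      _ = ∑ n ∈ Finset.range N,
            Complex.exp (-(2 * Real.pi * Complex.I * θ₁ * θ₂ / N)) *
              ((Complex.exp (-(2 * Real.pi * Complex.I * m * n / N)) / (Real.sqrt N : ℂ)) *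
                Complex.exp (-(2 * Real.pi * Complex.I * n * θ₁ / N)) *
                ∑' k : ℤ, Complex.exp (-(2 * Real.pi * Complex.I * θ₁ * k)) *
                  schwartzFourier φ (-(θ₂ + (n : ℝ) + (N : ℝ) * k))) := by
          refine Finset.sum_congr rfl fun n hn => ?_
          rw [← tsum_mul_left]
          rw [tsum_congr fun k => key n hn k]
          rw [tsum_mul_left]
          ring
      _ = _ := by rw [Finset.mul_sum]
end
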